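/- Let M be a finite subset of ℕⁿ and let I = { x ∈ ℕⁿ : ∃ m ∈ M, m ≤ x } be the ideal it generates (where ≤ is componentwise). The following are equivalent: (i) there exist a natural number k, a matrix A with k rows and n columns with entries in ℕ, and a vector w ∈ ℕ^k, such that I = { x ∈ ℕⁿ : A·x ≥ w componentwise }; (ii) I is the intersection of ℕⁿ with a convex subset of ℝⁿ; (iii) I = ℕⁿ ∩ (conv(M) + ℝ₊ⁿ), where conv(M) is the convex hull of M in ℝⁿ and ℝ₊ⁿ is the set of vectors in ℝⁿ with all coordinates nonnegative. -/

import Mathlib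

open scoped Pointwise

/-- The embedding of `ℕⁿ` into `ℝⁿ`. -/
def embR (n : ℕ) (x : Fin n → ℕ) : Fin n → ℝ := fun i => (x i : ℝ)

/-- The ideal of `ℕⁿ` generated by a finite set `M`. -/
def genIdeal (n : ℕ) (M : Finset (Fin n → ℕ)) : Set (Fin n → ℕ) := {x | ∃ m ∈ M, m ≤ x}

namespace Stmt17Aux

variable {n : ℕ}

/-- The nonnegative orthant. -/
def Pos (n : ℕ) : Set (Fin n → ℝ) := {y | ∀ i, 0 ≤ y i}

lemma convex_Pos : Convex ℝ (Pos n) := by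
  have h : Pos n = Set.pi Set.univ (fun _ : Fin n => Set.Ici (0:ℝ)) := by
    ext y; simp [Pos, Set.mem_pi, Pi.le_def]
  rw [h]; exact convex_pi fun i _ => convex_Ici 0

lemma isClosed_Pos : IsClosed (Pos n) := by
  have h : Pos n = Set.pi Set.univ (fun _ : Fin n => Set.Ici (0:ℝ)) := by
    ext y; simp [Pos, Set.mem_pi, Pi.le_def]
  rw [h]; exact isClosed_set_pi fun i _ => isClosed_Ici

lemma embR_injective : Function.Injective (embR n) := by
  intro x y h
  funext i
  exact Nat.cast_injective (congrFun h i)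

lemma range_embR : Set.range (embR n) = Set.pi Set.univ (fun _ : Fin n => Set.range ((↑) : ℕ → ℝ)) := by
  ext y
  constructor
  · rintro ⟨x, rfl⟩ i _
    exact ⟨x i, rfl⟩
  · intro h
    choose x hx using fun i => h i (Set.mem_univ i)
    exact ⟨x, funext fun i => hx i⟩

lemma Pos_subset_hull : Pos n ⊆ convexHull ℝ (Set.range (embR n)) := by
  rw [range_embR, convexHull_pi]
  intro y hy i _
  have h0 : (0:ℝ) ≤ y i := hy i
  have h1 : ((⌊y i⌋₊ : ℝ)) ≤ y i := Nat.floor_le h0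
  have h2 : y i ≤ ((⌊y i⌋₊ + 1 : ℕ) : ℝ) := by
    push_cast
    exact (Nat.lt_floor_add_one (y i)).le
  have hseg : y i ∈ segment ℝ ((⌊y i⌋₊ : ℝ)) ((⌊y i⌋₊ + 1 : ℕ) : ℝ) := by
    rw [segment_eq_Icc (h1.trans h2)]
    exact ⟨h1, h2⟩
  refine segment_subset_convexHull ?_ ?_ hseg
  · exact ⟨⌊y i⌋₊, rfl⟩
  · exact ⟨⌊y i⌋₊ + 1, rfl⟩

lemma hull_genIdeal (M : Finset (Fin n → ℕ)) :
    convexHull ℝ (embR n '' genIdeal n M) = convexHull ℝ (embR n '' (M : Set (Fin n → ℕ))) + Pos n := by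
  apply Set.Subset.antisymm
  · apply convexHull_min
    · rintro _ ⟨x, ⟨m, hm, hle⟩, rfl⟩
      rw [Set.mem_add]
      refine ⟨embR n m, subset_convexHull _ _ ⟨m, hm, rfl⟩, embR n x - embR n m, ?_, by ring⟩
      intro i
      simp only [Pi.sub_apply, embR, sub_nonneg]
      exact_mod_cast hle i
    · exact (convex_convexHull ℝ _).add convex_Pos
  · calc convexHull ℝ (embR n '' (M : Set (Fin n → ℕ))) + Pos n
        ⊆ convexHull ℝ (embR n '' (M : Set (Fin n → ℕ))) + convexHull ℝ (Set.range (embR n)) :=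
          Set.add_subset_add_left Pos_subset_hull
      _ = convexHull ℝ (embR n '' (M : Set (Fin n → ℕ)) + Set.range (embR n)) :=
          (convexHull_add _ _).symm
      _ ⊆ convexHull ℝ (embR n '' genIdeal n M) := by
          apply convexHull_mono
          rintro _ ⟨_, ⟨m, hm, rfl⟩, _, ⟨t, rfl⟩, rfl⟩
          refine ⟨m + t, ⟨m, hm, fun i => Nat.le_add_right _ _⟩, ?_⟩
          funext i
          simp [embR]


lemma two_to_three (M : Finset (Fin n → ℕ)) (C : Set (Fin n → ℝ)) (hC : Convex ℝ C)
    (hE : embR n '' genIdeal n M = Set.range (embR n) ∩ C) :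
    embR n '' genIdeal n M =
      Set.range (embR n) ∩ (convexHull ℝ (embR n '' (M : Set (Fin n → ℕ))) + Pos n) := by
  rw [← hull_genIdeal]
  apply Set.Subset.antisymm
  · exact Set.subset_inter (Set.image_subset_range _ _) (subset_convexHull _ _)
  · rintro y ⟨hy1, hy2⟩
    have hsub : embR n '' genIdeal n M ⊆ C := by
      rw [hE]; exact Set.inter_subset_right
    have : y ∈ C := convexHull_min hsub hC hy2
    rw [hE]; exact ⟨hy1, this⟩

lemma one_to_two (M : Finset (Fin n → ℕ)) (k : ℕ) (A : Matrix (Fin k) (Fin n) ℕ) (w : Fin k → ℕ)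
    (hI : genIdeal n M = {x : Fin n → ℕ | ∀ i, w i ≤ A.mulVec x i}) :
    ∃ C : Set (Fin n → ℝ), Convex ℝ C ∧
      embR n '' genIdeal n M = Set.range (embR n) ∩ C := by
  refine ⟨{y | ∀ j, (w j : ℝ) ≤ ∑ i, (A j i : ℝ) * y i}, ?_, ?_⟩
  · intro y hy z hz a b ha hb hab j
    have h1 : a * (w j : ℝ) ≤ a * ∑ i, (A j i : ℝ) * y i := mul_le_mul_of_nonneg_left (hy j) ha
    have h2 : b * (w j : ℝ) ≤ b * ∑ i, (A j i : ℝ) * z i := mul_le_mul_of_nonneg_left (hz j) hb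
    have h3 : (w j : ℝ) = a * w j + b * w j := by rw [← add_mul, hab, one_mul]
    rw [h3]
    calc a * (w j:ℝ) + b * w j ≤ a * (∑ i, (A j i : ℝ) * y i) + b * ∑ i, (A j i : ℝ) * z i :=
          add_le_add h1 h2
      _ = ∑ i, (A j i : ℝ) * (a • y + b • z) i := by
          rw [Finset.mul_sum, Finset.mul_sum, ← Finset.sum_add_distrib]
          apply Finset.sum_congr rfl
          intro i _
          simp only [Pi.add_apply, Pi.smul_apply, smul_eq_mul]
          ring
  · ext y
    constructor
    · rintro ⟨x, hx, rfl⟩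
      refine ⟨⟨x, rfl⟩, fun j => ?_⟩
      rw [hI] at hx
      have := hx j
      rw [Matrix.mulVec, dotProduct] at this
      calc ((w j : ℕ) : ℝ) ≤ ((∑ i, A j i * x i : ℕ) : ℝ) := by exact_mod_cast this
        _ = ∑ i, (A j i : ℝ) * embR n x i := by push_cast [embR]; rfl
    · rintro ⟨⟨x, rfl⟩, hy⟩
      refine ⟨x, ?_, rfl⟩
      rw [hI]
      intro j
      have := hy j
      have h2 : ((w j : ℕ) : ℝ) ≤ ((∑ i, A j i * x i : ℕ) : ℝ) := by
        convert this using 2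
        push_cast [embR]; rfl
      rw [Matrix.mulVec, dotProduct]
      exact_mod_cast h2


lemma row_exists (M : Finset (Fin n → ℕ))
    (h3 : ∀ x : Fin n → ℕ,
      embR n x ∈ convexHull ℝ (embR n '' (M : Set (Fin n → ℕ))) + Pos n → x ∈ genIdeal n M)
    (g : {m // m ∈ M} → Fin n) :
    ∃ (a : Fin n → ℕ) (w : ℕ),
      (∀ m : {m // m ∈ M}, w ≤ ∑ i, a i * m.1 i) ∧
      (∀ x : Fin n → ℕ, (∀ m : {m // m ∈ M}, x (g m) < m.1 (g m)) → ∑ i, a i * x i < w) := by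
  classical
  by_cases hz : ∃ m : {m // m ∈ M}, m.1 (g m) = 0
  · obtain ⟨m0, hm0⟩ := hz
    exact ⟨0, 0, fun m => Nat.zero_le _, fun x hx => absurd (hx m0) (by simp [hm0])⟩
  push_neg at hz
  -- the sets of generators attached to coordinate i
  set T : Fin n → Finset {m // m ∈ M} := fun i => Finset.univ.filter (fun m => g m = i) with hT
  -- the corner point
  set p : Fin n → ℕ := fun i =>
    if h : (T i).Nonempty then ((T i).image (fun m => m.1 i - 1)).min' (h.image _) else 0 with hp
  have hpe : ∀ i, ¬ (T i).Nonempty → p i = 0 := by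
    intro i h; simp [hp, h]
  have P1 : ∀ m : {m // m ∈ M}, p (g m) < m.1 (g m) := by
    intro m
    have hne : (T (g m)).Nonempty := ⟨m, by simp [hT]⟩
    have h1 : p (g m) ≤ m.1 (g m) - 1 := by
      rw [hp]
      simp only [hne, dif_pos]
      exact Finset.min'_le _ _ (Finset.mem_image_of_mem _ (by simp [hT]))
    have h2 : 0 < m.1 (g m) := Nat.pos_of_ne_zero (hz m)
    omega
  have P2 : ∀ x : Fin n → ℕ, (∀ m : {m // m ∈ M}, x (g m) < m.1 (g m)) →
      ∀ i, (T i).Nonempty → x i ≤ p i := by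
    intro x hx i hne
    rw [hp]
    simp only [hne, dif_pos]
    apply Finset.le_min'
    intro y hy
    obtain ⟨m, hm, rfl⟩ := Finset.mem_image.1 hy
    have hgm : g m = i := by simpa [hT] using hm
    have := hx m
    rw [hgm] at this
    omega
  -- the "zeroing" linear map
  set z : (Fin n → ℝ) →ₗ[ℝ] (Fin n → ℝ) :=
    { toFun := fun y i => if (T i).Nonempty then y i else 0
      map_add' := by intro u v; funext i; by_cases h : (T i).Nonempty <;> simp [h]
      map_smul' := by intro c u; funext i; by_cases h : (T i).Nonempty <;> simp [h] } with hzdef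
  have hz_apply : ∀ (y : Fin n → ℝ) i, z y i = if (T i).Nonempty then y i else 0 := fun y i => rfl
  set C : Set (Fin n → ℝ) :=
    convexHull ℝ (z '' (embR n '' (M : Set (Fin n → ℕ)))) + Pos n with hCdef
  have hCconv : Convex ℝ C := (convex_convexHull ℝ _).add convex_Pos
  have hCclosed : IsClosed C := by
    apply IsClosed.add_left_of_isCompact isClosed_Pos
    exact ((M.finite_toSet.image (embR n)).image z).isCompact_convexHull ℝ
  have hzM_mem_C : ∀ m : {m // m ∈ M}, z (embR n m.1) ∈ C := by
    intro m
    rw [hCdef, Set.mem_add]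
    exact ⟨z (embR n m.1), subset_convexHull _ _ ⟨embR n m.1, ⟨m.1, m.2, rfl⟩, rfl⟩,
      0, fun i => le_rfl, add_zero _⟩
  -- the corner is not in C
  have hpC : embR n p ∉ C := by
    intro hmem
    rw [hCdef, Set.mem_add] at hmem
    obtain ⟨c, hc, r, hr, hcr⟩ := hmem
    rw [← z.image_convexHull] at hc
    obtain ⟨c₀, hc₀, rfl⟩ := hc
    set Tmax : ℕ := M.sup (fun m => Finset.univ.sup m) with hTmax
    have hbound : ∀ i, c₀ i ≤ (Tmax : ℝ) := by
      intro i
      have hsub : convexHull ℝ (embR n '' (M : Set (Fin n → ℕ))) ⊆ {y | y i ≤ (Tmax : ℝ)} := by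
        apply convexHull_min
        · rintro _ ⟨m, hm, rfl⟩
          have h1 : m i ≤ Tmax := by
            calc m i ≤ Finset.univ.sup m := Finset.le_sup (Finset.mem_univ i)
              _ ≤ Tmax := Finset.le_sup hm
          show embR n m i ≤ (Tmax:ℝ)
          simp only [embR]
          exact_mod_cast h1
        · exact convex_halfSpace_le ⟨fun a b => rfl, fun c x => rfl⟩ _
      exact hsub hc₀
    set xT : Fin n → ℕ := fun i => if (T i).Nonempty then p i else Tmax with hxT
    have hxTmem : embR n xT ∈ convexHull ℝ (embR n '' (M : Set (Fin n → ℕ))) + Pos n := by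
      rw [Set.mem_add]
      refine ⟨c₀, hc₀, embR n xT - c₀, ?_, by ring⟩
      intro i
      simp only [Pi.sub_apply, sub_nonneg]
      by_cases hne : (T i).Nonempty
      · have h1 : z c₀ i + r i = embR n p i := congrFun hcr i
        rw [hz_apply] at h1
        simp only [hne, if_pos] at h1
        have h2 : c₀ i ≤ (p i : ℝ) := by
          have := hr i
          simp only [embR] at h1
          linarith
        have h3 : embR n xT i = (p i : ℝ) := by simp [embR, hxT, hne]
        rw [h3]; exact h2
      · have h3 : embR n xT i = (Tmax : ℝ) := by simp [embR, hxT, hne]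
        rw [h3]; exact hbound i
    obtain ⟨m0, hm0M, hle⟩ := h3 xT hxTmem
    set m : {m // m ∈ M} := ⟨m0, hm0M⟩ with hm
    have h1 : (T (g m)).Nonempty := ⟨m, by simp [hT]⟩
    have h2 : xT (g m) = p (g m) := by simp [hxT, h1]
    have h4 : m0 (g m) ≤ xT (g m) := hle (g m)
    have h5 : p (g m) < m0 (g m) := P1 m
    rw [h2] at h4
    omega
  -- separation
  obtain ⟨φ, u, hu1, hu2⟩ := geometric_hahn_banach_point_closed hCconv hCclosed hpC
  set a : Fin n → ℝ := fun i => φ (Pi.single i 1) with ha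
  have hφ : ∀ y : Fin n → ℝ, φ y = ∑ i, y i * a i := by
    intro y
    have h1 : y = ∑ i, y i • (fun j => if i = j then (1:ℝ) else 0) := pi_eq_sum_univ y
    have h2 : ∀ i : Fin n, (fun j => if i = j then (1:ℝ) else 0) = Pi.single i 1 := by
      intro i; funext j
      rw [Pi.single_apply]
      by_cases h : i = j <;> simp [h, eq_comm]
    conv_lhs => rw [h1]
    rw [map_sum]
    apply Finset.sum_congr rfl
    intro i _
    rw [h2 i, map_smul]
    simp [ha, mul_comm]
  -- nonnegativity of the functional coefficients on active coordinates
  have hanneg : ∀ i, (T i).Nonempty → 0 ≤ a i := by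
    intro i hne
    by_contra hneg
    push_neg at hneg
    obtain ⟨m, _⟩ := hne
    have hy0 : z (embR n m.1) ∈ C := hzM_mem_C m
    set t : ℝ := (φ (z (embR n m.1)) - u + 1) / (-(a i)) with htdef
    have hu0 : u < φ (z (embR n m.1)) := hu2 _ hy0
    have ht : 0 < t := div_pos (by linarith) (by linarith)
    have hy : z (embR n m.1) + t • (Pi.single i 1 : Fin n → ℝ) ∈ C := by
      rw [hCdef, Set.mem_add]
      refine ⟨z (embR n m.1), subset_convexHull _ _ ⟨embR n m.1, ⟨m.1, m.2, rfl⟩, rfl⟩,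
        t • (Pi.single i 1 : Fin n → ℝ), ?_, rfl⟩
      intro j
      simp only [Pi.smul_apply, smul_eq_mul, Pi.single_apply]
      by_cases h : j = i <;> simp [h, ht.le]
    have h6 := hu2 _ hy
    rw [map_add, map_smul] at h6
    have hne0 : -a i ≠ 0 := ne_of_gt (neg_pos.2 hneg)
    have h8 : φ (Pi.single i 1) = a i := rfl
    simp only [smul_eq_mul, h8] at h6
    have h7 : t * a i = -(φ (z (embR n m.1)) - u + 1) := by
      calc t * a i = -(t * -a i) := by ring
        _ = -(φ (z (embR n m.1)) - u + 1) := by rw [htdef, div_mul_cancel₀ _ hne0]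
    rw [h7] at h6
    linarith
  -- choose rational approximations
  have hup : φ (embR n p) < u := hu1
  set D : ℝ := (∑ i, (p i : ℝ)) + 1 with hD
  have hDpos : 0 < D := by positivity
  set ε : ℝ := (u - φ (embR n p)) / D with hε
  have hεpos : 0 < ε := div_pos (by linarith) hDpos
  have hqex : ∀ i : Fin n, ∃ q : ℚ,
      ((T i).Nonempty → (a i ≤ (q:ℝ) ∧ (q:ℝ) < a i + ε ∧ 0 ≤ q)) ∧
      (¬ (T i).Nonempty → q = 0) := by
    intro i
    by_cases hne : (T i).Nonempty
    · obtain ⟨q, hq1, hq2⟩ := exists_rat_btwn (show a i < a i + ε by linarith)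
      refine ⟨q, fun _ => ⟨hq1.le, hq2, ?_⟩, fun h => absurd hne h⟩
      have : (0:ℝ) ≤ (q:ℝ) := (hanneg i hne).trans hq1.le
      exact_mod_cast this
    · exact ⟨0, fun h => absurd h hne, fun _ => rfl⟩
  choose q hq1 hq2 using hqex
  -- key real inequalities
  have hSp : (∑ i, (q i : ℝ) * (p i : ℝ)) < u := by
    have hstep : (∑ i, (q i : ℝ) * (p i : ℝ)) ≤ (∑ i, (p i : ℝ) * a i) + ε * (∑ i, (p i : ℝ)) := by
      rw [Finset.mul_sum, ← Finset.sum_add_distrib]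
      apply Finset.sum_le_sum
      intro i _
      by_cases hne : (T i).Nonempty
      · obtain ⟨_, hlt, _⟩ := hq1 i hne
        have hpn : (0:ℝ) ≤ (p i : ℝ) := Nat.cast_nonneg _
        nlinarith
      · rw [hpe i hne]
        simp
    have hphi : (∑ i, (p i : ℝ) * a i) = φ (embR n p) := by
      rw [hφ (embR n p)]
      apply Finset.sum_congr rfl
      intro i _
      simp [embR]
    have hsum_lt : ε * (∑ i, (p i : ℝ)) < ε * D := by
      apply mul_lt_mul_of_pos_left _ hεpos
      rw [hD]; linarith
    have hεD : ε * D = u - φ (embR n p) := by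
      rw [hε]; field_simp
    linarith
  have hSm : ∀ m : {m // m ∈ M}, u < ∑ i, (q i : ℝ) * (m.1 i : ℝ) := by
    intro m
    have h0 : u < φ (z (embR n m.1)) := hu2 _ (hzM_mem_C m)
    have h1 : φ (z (embR n m.1)) = ∑ i, (if (T i).Nonempty then (m.1 i : ℝ) else 0) * a i := by
      rw [hφ]
      apply Finset.sum_congr rfl
      intro i _
      rw [hz_apply]
      by_cases hne : (T i).Nonempty <;> simp [hne, embR]
    have h2 : (∑ i, (if (T i).Nonempty then (m.1 i : ℝ) else 0) * a i)
        ≤ ∑ i, (q i : ℝ) * (m.1 i : ℝ) := by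
      apply Finset.sum_le_sum
      intro i _
      by_cases hne : (T i).Nonempty
      · obtain ⟨hge, _, _⟩ := hq1 i hne
        have hmn : (0:ℝ) ≤ (m.1 i : ℝ) := Nat.cast_nonneg _
        simp only [hne, if_pos]
        nlinarith
      · simp [hne, hq2 i hne]
    linarith
  -- rational inequalities
  have hQ : ∀ m : {m // m ∈ M}, (∑ i, q i * (p i : ℚ)) < ∑ i, q i * (m.1 i : ℚ) := by
    intro m
    have hr : ((∑ i, q i * (p i : ℚ) : ℚ) : ℝ) < ((∑ i, q i * (m.1 i : ℚ) : ℚ) : ℝ) := by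
      push_cast
      exact hSp.trans (hSm m)
    exact_mod_cast hr
  -- clear denominators
  set N : ℕ := ∏ i, (q i).den with hN
  have hNpos : 0 < N := Finset.prod_pos (fun i _ => (q i).pos)
  have hden : ∀ i, (q i).den ∣ N := fun i => Finset.dvd_prod_of_mem _ (Finset.mem_univ i)
  have hqnneg : ∀ i, 0 ≤ q i := by
    intro i
    by_cases hne : (T i).Nonempty
    · exact (hq1 i hne).2.2
    · rw [hq2 i hne]
  set c : Fin n → ℕ := fun i => (q i).num.toNat * (N / (q i).den) with hc
  have hcq : ∀ i, (c i : ℚ) = (N : ℚ) * q i := by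
    intro i
    obtain ⟨e, he⟩ := hden i
    have hnum : 0 ≤ (q i).num := Rat.num_nonneg.2 (hqnneg i)
    have h1 : c i = (q i).num.toNat * e := by
      rw [hc]
      simp only
      congr 1
      rw [he, Nat.mul_div_cancel_left e (q i).pos]
    have h3 : ((q i).num.toNat : ℚ) = ((q i).num : ℚ) := by
      exact_mod_cast congrArg (Int.cast : ℤ → ℚ) (Int.toNat_of_nonneg hnum)
    have h2 : ((c i : ℚ)) = ((q i).num : ℚ) * (e : ℚ) := by
      rw [h1, Nat.cast_mul, h3]
    have hd : ((q i).den : ℚ) ≠ 0 := by exact_mod_cast (q i).den_nz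
    have h4 : ((q i).num : ℚ) = q i * ((q i).den : ℚ) :=
      (div_eq_iff hd).1 (Rat.num_div_den (q i))
    rw [h2, he]
    push_cast
    rw [h4]
    ring
  have hczero : ∀ i, ¬ (T i).Nonempty → c i = 0 := by
    intro i hne
    rw [hc]
    simp [hq2 i hne]
  -- natural-number inequalities
  have hmain : ∀ m : {m // m ∈ M}, (∑ i, c i * p i) < ∑ i, c i * m.1 i := by
    intro m
    have h1 : ((∑ i, c i * p i : ℕ) : ℚ) < ((∑ i, c i * m.1 i : ℕ) : ℚ) := by
      push_cast
      calc (∑ i, (c i : ℚ) * (p i : ℚ)) = (N:ℚ) * ∑ i, q i * (p i : ℚ) := by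
            rw [Finset.mul_sum]
            apply Finset.sum_congr rfl
            intro i _
            rw [hcq i]; ring
        _ < (N:ℚ) * ∑ i, q i * (m.1 i : ℚ) := by
            apply mul_lt_mul_of_pos_left (hQ m)
            exact_mod_cast hNpos
        _ = ∑ i, (c i : ℚ) * (m.1 i : ℚ) := by
            rw [Finset.mul_sum]
            apply Finset.sum_congr rfl
            intro i _
            rw [hcq i]; ring
    exact_mod_cast h1
  refine ⟨c, (∑ i, c i * p i) + 1, ?_, ?_⟩
  · intro m
    have := hmain m
    omega
  · intro x hx
    have hxp : ∑ i, c i * x i ≤ ∑ i, c i * p i := by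
      apply Finset.sum_le_sum
      intro i _
      by_cases hne : (T i).Nonempty
      · exact Nat.mul_le_mul_left _ (P2 x hx i hne)
      · rw [hczero i hne]
        simp
    omega


lemma three_to_one (M : Finset (Fin n → ℕ))
    (h3 : embR n '' genIdeal n M =
      Set.range (embR n) ∩ (convexHull ℝ (embR n '' (M : Set (Fin n → ℕ))) + Pos n)) :
    ∃ (k : ℕ) (A : Matrix (Fin k) (Fin n) ℕ) (w : Fin k → ℕ),
      genIdeal n M = {x : Fin n → ℕ | ∀ i, w i ≤ A.mulVec x i} := by
  classical
  have h3' : ∀ x : Fin n → ℕ,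
      embR n x ∈ convexHull ℝ (embR n '' (M : Set (Fin n → ℕ))) + Pos n → x ∈ genIdeal n M := by
    intro x hx
    have hmem : embR n x ∈ embR n '' genIdeal n M := by
      rw [h3]; exact ⟨⟨x, rfl⟩, hx⟩
    obtain ⟨y, hy, hyx⟩ := hmem
    rwa [← embR_injective hyx]
  choose rowa roww ha hb using row_exists M h3'
  let e : Fin (Fintype.card ({m // m ∈ M} → Fin n)) ≃ ({m // m ∈ M} → Fin n) :=
    (Fintype.equivFin ({m // m ∈ M} → Fin n)).symm
  refine ⟨Fintype.card ({m // m ∈ M} → Fin n),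
    Matrix.of (fun j i => rowa (e j) i), fun j => roww (e j), ?_⟩
  ext x
  constructor
  · rintro ⟨m, hm, hle⟩ j
    have h1 : roww (e j) ≤ ∑ i, rowa (e j) i * m i := ha (e j) ⟨m, hm⟩
    have h2 : ∑ i, rowa (e j) i * m i ≤ ∑ i, rowa (e j) i * x i :=
      Finset.sum_le_sum fun i _ => Nat.mul_le_mul_left _ (hle i)
    have h4 : (Matrix.of (fun j i => rowa (e j) i)).mulVec x j = ∑ i, rowa (e j) i * x i := rfl
    show roww (e j) ≤ _
    rw [h4]
    exact h1.trans h2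
  · intro hx
    by_contra hxI
    have hch : ∀ m : {m // m ∈ M}, ∃ i, x i < m.1 i := by
      intro m
      by_contra hcon
      push_neg at hcon
      exact hxI ⟨m.1, m.2, fun i => hcon i⟩
    choose g hg using hch
    have h1 : ∑ i, rowa g i * x i < roww g := hb g x hg
    have h2 := hx (e.symm g)
    have h4 : (Matrix.of (fun j i => rowa (e j) i)).mulVec x (e.symm g)
        = ∑ i, rowa (e (e.symm g)) i * x i := rfl
    rw [h4] at h2
    simp only [Equiv.apply_symm_apply] at h2
    omega

end Stmt17Aux

/-- For the ideal `I` of `ℕⁿ` generated by a finite set `M`, the following are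
equivalent: (i) `I = {x | A·x ≥ w}` for some nonnegative integer matrix `A` and vector
`w`; (ii) `I` is the intersection of `ℕⁿ` with a convex subset of `ℝⁿ`;
(iii) `I = ℕⁿ ∩ (conv(M) + ℝ₊ⁿ)`. -/
theorem stmt17 (n : ℕ) (M : Finset (Fin n → ℕ)) :
    ((∃ (k : ℕ) (A : Matrix (Fin k) (Fin n) ℕ) (w : Fin k → ℕ),
        genIdeal n M = {x : Fin n → ℕ | ∀ i, w i ≤ A.mulVec x i}) ↔
      (∃ C : Set (Fin n → ℝ), Convex ℝ C ∧
        embR n '' genIdeal n M = Set.range (embR n) ∩ C)) ∧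
    ((∃ C : Set (Fin n → ℝ), Convex ℝ C ∧
        embR n '' genIdeal n M = Set.range (embR n) ∩ C) ↔
      embR n '' genIdeal n M =
        Set.range (embR n) ∩
          (convexHull ℝ (embR n '' (↑M : Set (Fin n → ℕ))) +
            {y : Fin n → ℝ | ∀ i, 0 ≤ y i})) := by

  have hPos : {y : Fin n → ℝ | ∀ i, 0 ≤ y i} = Stmt17Aux.Pos n := rfl
  constructor
  · constructor
    · rintro ⟨k, A, w, hI⟩
      exact Stmt17Aux.one_to_two M k A w hI
    · rintro ⟨C, hC, hE⟩
      have h3 := Stmt17Aux.two_to_three M C hC hE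
      exact Stmt17Aux.three_to_one M h3
  · constructor
    · rintro ⟨C, hC, hE⟩
      rw [hPos]
      exact Stmt17Aux.two_to_three M C hC hE
    · intro h3
      rw [hPos] at h3
      exact ⟨_, (convex_convexHull ℝ _).add Stmt17Aux.convex_Pos, h3⟩
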